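/- arXiv:0909.4955 — 2 statements merged into one kernel-verified Lean document; each statement's English description precedes it below -/
import Mathlib

section
/- Let f, g ∈ ℝ[x,y,λ] and let h = gcd(f,g), with f = f̄·h and g = ḡ·h. Let a ∈ ℝ be such that: the leading coefficients of f and g with respect to x do not vanish at λ = a, the leading coefficients of f and g with respect to y do not vanish at λ = a, and neither Res_x(f̄, ḡ) nor Res_y(f̄, ḡ) vanishes at λ = a. Then gcd(f(x,y,a), g(x,y,a)) = h(x,y,a) (up to a unit in ℝ). -/
open Polynomial

/-- The Sylvester matrix of two univariate polynomials. -/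
noncomputable def sylvesterMat {R : Type*} [CommRing R] (p q : R[X]) :
    Matrix (Fin (q.natDegree + p.natDegree)) (Fin (q.natDegree + p.natDegree)) R :=
  Matrix.of fun i j =>
    if (i : ℕ) < q.natDegree then
      (if (i : ℕ) ≤ (j : ℕ) ∧ (j : ℕ) ≤ (i : ℕ) + p.natDegree then
        p.coeff (p.natDegree + (i : ℕ) - (j : ℕ)) else 0)
    else
      (if (i : ℕ) - q.natDegree ≤ (j : ℕ) ∧
          (j : ℕ) ≤ ((i : ℕ) - q.natDegree) + q.natDegree then
        q.coeff (q.natDegree + ((i : ℕ) - q.natDegree) - (j : ℕ)) else 0)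

/-- The resultant of two univariate polynomials, as the determinant of the
Sylvester matrix. -/
noncomputable def res {R : Type*} [CommRing R] (p q : R[X]) : R :=
  (sylvesterMat p q).det

lemma row_helper {S : Type*} [CommRing S] (r : S[X]) (i L : ℕ) (hi : i + r.natDegree < L) :
    ∑ j ∈ Finset.range L,
      (if i ≤ j ∧ j ≤ i + r.natDegree then (C (r.coeff (r.natDegree + i - j)) : S[X]) else 0)
        * X ^ (L - 1 - j)
    = X ^ (L - 1 - i - r.natDegree) * r := by
  have hsub : Finset.Ico i (i + r.natDegree + 1) ⊆ Finset.range L := by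
    intro j hj; simp only [Finset.mem_Ico, Finset.mem_range] at *; omega
  rw [← Finset.sum_subset hsub (by
    intro j hjL hj
    simp only [Finset.mem_Ico] at hj
    rw [if_neg (by omega), zero_mul])]
  rw [Finset.sum_Ico_eq_sum_range]
  have hn : i + r.natDegree + 1 - i = r.natDegree + 1 := by omega
  rw [hn]
  rw [show X ^ (L - 1 - i - r.natDegree) * r
      = ∑ k ∈ Finset.range (r.natDegree + 1),
          X ^ (L - 1 - i - r.natDegree) * (monomial k) (r.coeff k) from by
    rw [← Finset.mul_sum, ← r.as_sum_range' _ (by omega)]]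
  rw [← Finset.sum_range_reflect
    (fun k => X ^ (L - 1 - i - r.natDegree) * (monomial k) (r.coeff k)) (r.natDegree + 1)]
  refine Finset.sum_congr rfl fun k hk => ?_
  simp only [Finset.mem_range] at hk
  rw [if_pos (by omega), ← C_mul_X_pow_eq_monomial,
    show r.natDegree + i - (i + k) = r.natDegree + 1 - 1 - k by omega,
    show L - 1 - (i + k) = (r.natDegree + 1 - 1 - k) + (L - 1 - i - r.natDegree) by omega,
    pow_add]
  ring

lemma sylvester_mulVec {S : Type*} [CommRing S] (p q : S[X])
    (i : Fin (q.natDegree + p.natDegree)) :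
    (((sylvesterMat p q).map (C : S → S[X])).mulVec
        fun j => X ^ (q.natDegree + p.natDegree - 1 - (j : ℕ))) i
    = if (i : ℕ) < q.natDegree then X ^ (q.natDegree - 1 - (i : ℕ)) * p
      else X ^ (p.natDegree - 1 - ((i : ℕ) - q.natDegree)) * q := by
  simp only [Matrix.mulVec, dotProduct, Matrix.map_apply, sylvesterMat, Matrix.of_apply]
  by_cases him : (i : ℕ) < q.natDegree
  · rw [if_pos him]
    simp only [him, if_true]
    simp only [apply_ite (C : S → S[X]), map_zero]
    rw [Fin.sum_univ_eq_sum_range (fun j =>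
      (if (i : ℕ) ≤ j ∧ j ≤ (i : ℕ) + p.natDegree then
        (C (p.coeff (p.natDegree + (i : ℕ) - j)) : S[X]) else 0)
        * X ^ (q.natDegree + p.natDegree - 1 - j)) _ ,
      row_helper p (i : ℕ) _ (by omega)]
    congr 1
    congr 1
    omega
  · rw [if_neg him]
    simp only [him, if_false]
    simp only [apply_ite (C : S → S[X]), map_zero]
    rw [Fin.sum_univ_eq_sum_range (fun j =>
      (if (i : ℕ) - q.natDegree ≤ j ∧ j ≤ ((i : ℕ) - q.natDegree) + q.natDegree then
        (C (q.coeff (q.natDegree + ((i : ℕ) - q.natDegree) - j)) : S[X]) else 0)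
        * X ^ (q.natDegree + p.natDegree - 1 - j)) _ ,
      row_helper q ((i : ℕ) - q.natDegree) _ (by omega)]
    congr 1
    congr 1
    omega

lemma res_eq_comb {S : Type*} [CommRing S] (p q : S[X])
    (hN : 0 < q.natDegree + p.natDegree) :
    ∃ u v : S[X], C (res p q) = u * p + v * q := by
  set N := q.natDegree + p.natDegree with hNdef
  set A := (sylvesterMat p q).map (C : S → S[X]) with hA
  set w : Fin N → S[X] := fun j => X ^ (N - 1 - (j : ℕ)) with hw
  have key : A.adjugate.mulVec (A.mulVec w) = A.det • w := by
    rw [Matrix.mulVec_mulVec, Matrix.adjugate_mul, Matrix.smul_mulVec,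
      Matrix.one_mulVec]
  have hdet : A.det = C (res p q) := by
    rw [res, RingHom.map_det, RingHom.mapMatrix_apply]
  set j₀ : Fin N := ⟨N - 1, by omega⟩ with hj₀
  have key0 := congrFun key j₀
  have hrhs : (A.det • w) j₀ = C (res p q) := by
    rw [Pi.smul_apply, smul_eq_mul, hdet, hw]
    simp only [hj₀]
    rw [show N - 1 - (N - 1 : ℕ) = 0 by omega, pow_zero, mul_one]
  refine ⟨∑ i : Fin N, if (i : ℕ) < q.natDegree then
      A.adjugate j₀ i * X ^ (q.natDegree - 1 - (i : ℕ)) else 0,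
    ∑ i : Fin N, if (i : ℕ) < q.natDegree then 0 else
      A.adjugate j₀ i * X ^ (p.natDegree - 1 - ((i : ℕ) - q.natDegree)), ?_⟩
  rw [← hrhs, ← key0]
  rw [Finset.sum_mul, Finset.sum_mul, ← Finset.sum_add_distrib]
  show dotProduct (A.adjugate j₀) (A.mulVec w) = _
  rw [dotProduct]
  refine Finset.sum_congr rfl fun i _ => ?_
  rw [show A.mulVec w i = if (i : ℕ) < q.natDegree then X ^ (q.natDegree - 1 - (i : ℕ)) * p
      else X ^ (p.natDegree - 1 - ((i : ℕ) - q.natDegree)) * q from sylvester_mulVec p q i]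
  split_ifs with hc
  · rw [zero_mul, add_zero]; ring
  · rw [zero_mul, zero_add]; ring

/-- `h` is a gcd of `f` and `g` (well defined up to a unit). -/
def IsGCDOf {R : Type*} [CommRing R] (h f g : R) : Prop :=
  h ∣ f ∧ h ∣ g ∧ ∀ d : R, d ∣ f → d ∣ g → d ∣ h

/-- The ring `ℝ[x,y,λ]`, written as `((ℝ[λ])[y])[x]`: `x` is the outer
variable, `y` the middle one and `λ` the inner one. -/
noncomputable abbrev R3 := Polynomial (Polynomial (Polynomial ℝ))

/-- The swap of the variables `x` and `y`, carrying `((ℝ[λ])[y])[x]` to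
`((ℝ[λ])[x])[y]` (the same ring, with the roles of the two outer variables
exchanged). -/
noncomputable def pswap : R3 →+* R3 :=
  eval₂RingHom
    (eval₂RingHom ((Polynomial.C.comp Polynomial.C : Polynomial ℝ →+* R3))
      (Polynomial.X : R3))
    (Polynomial.C (Polynomial.X : Polynomial (Polynomial ℝ)))

/-- The specialization `λ := a`, from `ℝ[x,y,λ]` to `ℝ[x,y] = (ℝ[y])[x]`. -/
noncomputable def specAt (a : ℝ) : R3 →+* Polynomial (Polynomial ℝ) :=
  mapRingHom (mapRingHom (evalRingHom a))

/-- The swap of variables on `ℝ[x,y]`. -/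
noncomputable def sigma2 : Polynomial (Polynomial ℝ) →+* Polynomial (Polynomial ℝ) :=
  eval₂RingHom
    (eval₂RingHom ((Polynomial.C.comp Polynomial.C : ℝ →+* Polynomial (Polynomial ℝ)))
      (Polynomial.X : Polynomial (Polynomial ℝ)))
    (Polynomial.C (Polynomial.X : Polynomial ℝ))

lemma sigma2_C (p₀ : Polynomial ℝ) :
    sigma2 (C p₀) = p₀.map (C : ℝ →+* Polynomial ℝ) := by
  rw [sigma2, coe_eval₂RingHom, eval₂_C, coe_eval₂RingHom]
  rfl

lemma sigma2_comp_specAt (a : ℝ) :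
    sigma2.comp (specAt a) = (specAt a).comp pswap := by
  apply Polynomial.ringHom_ext
  · intro p
    have h2 : (sigma2.comp (specAt a)).comp (C : Polynomial (Polynomial ℝ) →+* R3)
        = ((specAt a).comp pswap).comp (C : Polynomial (Polynomial ℝ) →+* R3) := by
      apply Polynomial.ringHom_ext
      · intro r
        have h3 : ((sigma2.comp (specAt a)).comp
              (C : Polynomial (Polynomial ℝ) →+* R3)).comp (C : Polynomial ℝ →+* _)
            = (((specAt a).comp pswap).comp
              (C : Polynomial (Polynomial ℝ) →+* R3)).comp (C : Polynomial ℝ →+* _) := by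
          apply Polynomial.ringHom_ext
          · intro x
            simp [specAt, pswap, sigma2, coe_mapRingHom, coe_eval₂RingHom]
          · simp [specAt, pswap, sigma2, coe_mapRingHom, coe_eval₂RingHom]
        exact DFunLike.congr_fun h3 r
      · simp [specAt, pswap, sigma2, coe_mapRingHom, coe_eval₂RingHom]
    exact DFunLike.congr_fun h2 p
  · simp [specAt, pswap, sigma2, coe_mapRingHom, coe_eval₂RingHom]

lemma specAt_C (a : ℝ) (s : Polynomial (Polynomial ℝ)) :
    specAt a (C s) = C (s.map (evalRingHom a)) := by
  simp [specAt, coe_mapRingHom]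

lemma specAt_coeff (a : ℝ) (f : R3) (n : ℕ) :
    (specAt a f).coeff n = (f.coeff n).map (evalRingHom a) := by
  simp [specAt, coe_mapRingHom, coeff_map]

/-- if `h = gcd(f,g)`, and `a ∈ ℝ` is such that the leading
coefficients of `f` and `g` with respect to `x` and with respect to `y` do not
vanish at `λ = a`, and neither `Res_x(f̄,ḡ)` nor `Res_y(f̄,ḡ)` vanishes
(identically) at `λ = a`, then `h(x,y,a)` is a gcd of `f(x,y,a)` and
`g(x,y,a)` (i.e. the gcd specializes, up to a unit). -/
theorem specialization_of_gcd (f g fb gb h : R3) (a : ℝ)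
    (hgcd : IsGCDOf h f g) (hf : f = fb * h) (hg : g = gb * h)
    (hlcx_f : (Polynomial.map (evalRingHom a) f.leadingCoeff) ≠ 0)
    (hlcx_g : (Polynomial.map (evalRingHom a) g.leadingCoeff) ≠ 0)
    (hlcy_f : (Polynomial.map (evalRingHom a) (pswap f).leadingCoeff) ≠ 0)
    (hlcy_g : (Polynomial.map (evalRingHom a) (pswap g).leadingCoeff) ≠ 0)
    (hresx : (Polynomial.map (evalRingHom a) (res fb gb)) ≠ 0)
    (hresy : (Polynomial.map (evalRingHom a) (res (pswap fb) (pswap gb))) ≠ 0) :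
    IsGCDOf (specAt a h) (specAt a f) (specAt a g) := by
  obtain ⟨hhf, hhg, -⟩ := hgcd
  have hF : specAt a f = specAt a fb * specAt a h := by rw [hf, map_mul]
  have hG : specAt a g = specAt a gb * specAt a h := by rw [hg, map_mul]
  have hF0 : specAt a f ≠ 0 := by
    intro h0
    apply hlcx_f
    have h1 := specAt_coeff a f f.natDegree
    rw [h0, coeff_zero] at h1
    exact h1.symm
  have hFy0 : specAt a (pswap f) ≠ 0 := by
    intro h0
    apply hlcy_f
    have h1 := specAt_coeff a (pswap f) (pswap f).natDegree
    rw [h0, coeff_zero] at h1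
    exact h1.symm
  have hFb0 : specAt a fb ≠ 0 := fun h0 => hF0 (by rw [hF, h0, zero_mul])
  have hpFy : specAt a (pswap f) = specAt a (pswap fb) * specAt a (pswap h) := by
    rw [hf, map_mul, map_mul]
  have hFby0 : specAt a (pswap fb) ≠ 0 := fun h0 => hFy0 (by rw [hpFy, h0, zero_mul])
  have hrel : IsRelPrime (specAt a fb) (specAt a gb) := by
    intro d hdF hdG
    have hdx : ∃ r : Polynomial ℝ, r ≠ 0 ∧ d ∣ C r := by
      by_cases hN : 0 < gb.natDegree + fb.natDegree
      · obtain ⟨u, v, huv⟩ := res_eq_comb fb gb hN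
        refine ⟨(res fb gb).map (evalRingHom a), hresx, ?_⟩
        have h2 := congrArg (specAt a) huv
        rw [map_add, map_mul, map_mul, specAt_C] at h2
        rw [h2]
        exact dvd_add (Dvd.dvd.mul_left hdF _) (Dvd.dvd.mul_left hdG _)
      · obtain ⟨c, hc⟩ := Polynomial.natDegree_eq_zero.mp (show fb.natDegree = 0 by omega)
        refine ⟨c.map (evalRingHom a), ?_, ?_⟩
        · intro h0
          apply hFb0
          rw [← hc, specAt_C, h0, map_zero]
        · rw [show (C (c.map (evalRingHom a)) : Polynomial (Polynomial ℝ)) = specAt a fb by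
            rw [← hc, specAt_C]]
          exact hdF
    have hsF : sigma2 (specAt a fb) = specAt a (pswap fb) :=
      DFunLike.congr_fun (sigma2_comp_specAt a) fb
    have hsG : sigma2 (specAt a gb) = specAt a (pswap gb) :=
      DFunLike.congr_fun (sigma2_comp_specAt a) gb
    have hdy : ∃ r : Polynomial ℝ, r ≠ 0 ∧ sigma2 d ∣ C r := by
      by_cases hN : 0 < (pswap gb).natDegree + (pswap fb).natDegree
      · obtain ⟨u, v, huv⟩ := res_eq_comb (pswap fb) (pswap gb) hN
        refine ⟨(res (pswap fb) (pswap gb)).map (evalRingHom a), hresy, ?_⟩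
        have h2 := congrArg (specAt a) huv
        rw [map_add, map_mul, map_mul, specAt_C] at h2
        rw [h2]
        refine dvd_add (Dvd.dvd.mul_left ?_ _) (Dvd.dvd.mul_left ?_ _)
        · rw [← hsF]; exact map_dvd sigma2 hdF
        · rw [← hsG]; exact map_dvd sigma2 hdG
      · obtain ⟨c, hc⟩ :=
          Polynomial.natDegree_eq_zero.mp (show (pswap fb).natDegree = 0 by omega)
        refine ⟨c.map (evalRingHom a), ?_, ?_⟩
        · intro h0
          apply hFby0
          rw [← hc, specAt_C, h0, map_zero]
        · rw [show (C (c.map (evalRingHom a)) : Polynomial (Polynomial ℝ))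
              = specAt a (pswap fb) by rw [← hc, specAt_C], ← hsF]
          exact map_dvd sigma2 hdF
    obtain ⟨r, hr0, hdr⟩ := hdx
    obtain ⟨r', hr'0, hdr'⟩ := hdy
    have hd0 : d ≠ 0 := by rintro rfl; exact hFb0 (zero_dvd_iff.mp hdF)
    have hdeg : d.natDegree = 0 := by
      have h3 := Polynomial.natDegree_le_of_dvd hdr (by simpa using hr0)
      simpa [natDegree_C] using h3
    obtain ⟨d₀, hd₀⟩ := Polynomial.natDegree_eq_zero.mp hdeg
    have hσdeg : (sigma2 d).natDegree = 0 := by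
      have h3 := Polynomial.natDegree_le_of_dvd hdr' (by simpa using hr'0)
      simpa [natDegree_C] using h3
    rw [← hd₀, sigma2_C, natDegree_map_eq_of_injective C_injective] at hσdeg
    obtain ⟨c, hcc⟩ := Polynomial.natDegree_eq_zero.mp hσdeg
    have hdC : d = C (C c) := by rw [← hd₀, hcc]
    have hc0 : c ≠ 0 := by
      rintro rfl
      rw [map_zero, map_zero] at hdC
      exact hd0 hdC
    rw [hdC]
    exact isUnit_C.mpr (isUnit_C.mpr (isUnit_iff_ne_zero.mpr hc0))
  refine ⟨_root_.map_dvd _ hhf, _root_.map_dvd _ hhg, ?_⟩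
  intro d hdf hdg
  letI : GCDMonoid (Polynomial (Polynomial ℝ)) := UniqueFactorizationMonoid.toGCDMonoid _
  have h1 : d ∣ gcd (specAt a f) (specAt a g) := dvd_gcd hdf hdg
  have h2 : d ∣ gcd (specAt a fb) (specAt a gb) * specAt a h := by
    rw [hF, hG] at h1
    exact h1.trans (gcd_mul_right' (specAt a h) (specAt a fb) (specAt a gb)).dvd
  have hu : IsUnit (gcd (specAt a fb) (specAt a gb)) :=
    hrel (gcd_dvd_left _ _) (gcd_dvd_right _ _)
  obtain ⟨v, hv⟩ := hu
  rw [← hv] at h2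
  exact h2.trans ⟨(↑v⁻¹ : Polynomial (Polynomial ℝ)), by rw [mul_right_comm]; simp⟩
end

section
/- Let f̄, ḡ ∈ ℝ[x,y,λ] with gcd(f̄, ḡ) = 1, and let a ∈ ℝ be such that the leading coefficients of f̄ and ḡ with respect to x and with respect to y do not vanish at λ = a, and the polynomials Res_x(f̄,ḡ) and Res_y(f̄,ḡ) do not vanish identically when λ = a is substituted. Then gcd(f̄(x,y,a), ḡ(x,y,a)) = 1. -/
open Polynomial

namespace SpecAux

variable {R S : Type*} [CommRing R] [CommRing S]

noncomputable def sylAux (p q : R[X]) (m n : ℕ) :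
    Matrix (Fin (n + m)) (Fin (n + m)) R :=
  Matrix.of fun i j =>
    if (i : ℕ) < n then
      (if (i : ℕ) ≤ (j : ℕ) ∧ (j : ℕ) ≤ (i : ℕ) + m then
        p.coeff (m + (i : ℕ) - (j : ℕ)) else 0)
    else
      (if (i : ℕ) - n ≤ (j : ℕ) ∧ (j : ℕ) ≤ ((i : ℕ) - n) + n then
        q.coeff (n + ((i : ℕ) - n) - (j : ℕ)) else 0)

lemma sylvesterMat_eq (p q : R[X]) :
    sylvesterMat p q = sylAux p q p.natDegree q.natDegree := rfl

lemma sylAux_map (φ : R →+* S) (p q : R[X]) (m n : ℕ) :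
    sylAux (p.map φ) (q.map φ) m n = (sylAux p q m n).map φ := by
  ext i j
  simp only [sylAux, Matrix.of_apply, Matrix.map_apply, coeff_map]
  split_ifs <;> simp

lemma res_map (φ : R →+* S) (p q : R[X])
    (hp : (p.map φ).natDegree = p.natDegree)
    (hq : (q.map φ).natDegree = q.natDegree) :
    res (p.map φ) (q.map φ) = φ (res p q) := by
  unfold res
  rw [sylvesterMat_eq, sylvesterMat_eq, hp, hq, sylAux_map, RingHom.map_det, RingHom.mapMatrix_apply]

lemma rowsum (r : R[X]) (i0 N : ℕ) (h : i0 + r.natDegree < N) :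
    ∑ j ∈ Finset.range N,
      (if i0 ≤ j ∧ j ≤ i0 + r.natDegree then
        (X : R[X]) ^ (N - 1 - j) * C (r.coeff (r.natDegree + i0 - j)) else 0)
    = X ^ (N - 1 - (i0 + r.natDegree)) * r := by
  set m := r.natDegree with hm
  have h1 : ∀ j ∈ Finset.range N,
      (if i0 ≤ j ∧ j ≤ i0 + m then
        (X : R[X]) ^ (N - 1 - j) * C (r.coeff (m + i0 - j)) else 0)
      = if j ∈ Finset.Ico i0 (i0 + m + 1) then
        (X : R[X]) ^ (N - 1 - j) * C (r.coeff (m + i0 - j)) else 0 := by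
    intro j _
    congr 1
    simp only [Finset.mem_Ico, eq_iff_iff]
    omega
  have hsub : Finset.Ico i0 (i0 + m + 1) ⊆ Finset.range N := by
    intro j hj
    simp only [Finset.mem_Ico] at hj
    simp only [Finset.mem_range]
    omega
  rw [Finset.sum_congr rfl h1, Finset.sum_ite_mem,
    Finset.inter_eq_right.mpr hsub, Finset.sum_Ico_eq_sum_range]
  have hcnt : i0 + m + 1 - i0 = m + 1 := by omega
  rw [hcnt]
  have h2 : ∀ k ∈ Finset.range (m + 1),
      (X : R[X]) ^ (N - 1 - (i0 + k)) * C (r.coeff (m + i0 - (i0 + k)))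
      = (fun t => (X : R[X]) ^ ((N - 1 - (i0 + m)) + t) * C (r.coeff t)) (m + 1 - 1 - k) := by
    intro k hk
    simp only [Finset.mem_range] at hk
    have e1 : N - 1 - (i0 + k) = (N - 1 - (i0 + m)) + (m + 1 - 1 - k) := by omega
    have e2 : m + i0 - (i0 + k) = m + 1 - 1 - k := by omega
    rw [e1, e2]
  have h3 := Finset.sum_range_reflect
    (fun t => (X : R[X]) ^ ((N - 1 - (i0 + m)) + t) * C (r.coeff t)) (m + 1)
  rw [Finset.sum_congr rfl h2, h3]
  conv_rhs => rw [r.as_sum_range_C_mul_X_pow]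
  rw [Finset.mul_sum]
  exact Finset.sum_congr rfl fun k _ => by rw [pow_add]; ring

lemma res_mem_span (p q : R[X]) (hN : 0 < q.natDegree + p.natDegree) :
    (C (res p q) : R[X]) ∈ Ideal.span ({p, q} : Set R[X]) := by
  set m := p.natDegree with hm
  set n := q.natDegree with hn
  set N := n + m with hNdef
  set A : Matrix (Fin N) (Fin N) R[X] := (sylvesterMat p q).map ⇑(C : R →+* R[X]) with hA
  set c : Fin N → R[X] := fun j => X ^ (N - 1 - (j : ℕ)) with hc
  have hrow : ∀ k : Fin N, (∑ i : Fin N, c i • A k i) =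
      (if (k : ℕ) < n then X ^ (N - 1 - ((k : ℕ) + m)) * p
       else X ^ (N - 1 - (k : ℕ)) * q) := by
    intro k
    have hkN := k.isLt
    set F : ℕ → R[X] := fun j : ℕ => (X : R[X]) ^ (N - 1 - j) *
          C (if (k : ℕ) < n then
              (if (k : ℕ) ≤ j ∧ j ≤ (k : ℕ) + m then p.coeff (m + (k : ℕ) - j) else 0)
            else
              (if (k : ℕ) - n ≤ j ∧ j ≤ ((k : ℕ) - n) + n then
                q.coeff (n + ((k : ℕ) - n) - j) else 0)) with hF
    have hFin : ∀ i : Fin N, c i • A k i = F (i : ℕ) := by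
      intro i
      simp only [hF, hA, hc, Matrix.map_apply, sylvesterMat, Matrix.of_apply, smul_eq_mul]
      rfl
    rw [Finset.sum_congr rfl fun i _ => hFin i, Fin.sum_univ_eq_sum_range F N]
    rcases lt_or_ge (k : ℕ) n with hk | hk
    · rw [if_pos hk]
      have e : ∀ j ∈ Finset.range N,
          F j = (if (k : ℕ) ≤ j ∧ j ≤ (k : ℕ) + m then
              (X : R[X]) ^ (N - 1 - j) * C (p.coeff (m + (k : ℕ) - j)) else 0) := by
        intro j _
        rw [hF]
        simp only [if_pos hk]
        split_ifs <;> simp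
      rw [Finset.sum_congr rfl e, rowsum p (k : ℕ) N (by omega)]
    · rw [if_neg (by omega)]
      have e : ∀ j ∈ Finset.range N,
          F j = (if (k : ℕ) - n ≤ j ∧ j ≤ ((k : ℕ) - n) + n then
              (X : R[X]) ^ (N - 1 - j) * C (q.coeff (n + ((k : ℕ) - n) - j)) else 0) := by
        intro j _
        rw [hF]
        simp only [if_neg (show ¬ (k : ℕ) < n by omega)]
        split_ifs <;> simp
      have hq : ((k : ℕ) - n) + n = (k : ℕ) := by omega
      rw [Finset.sum_congr rfl e, rowsum q ((k : ℕ) - n) N (by omega), hq]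
  set L : Fin N := ⟨N - 1, by omega⟩ with hL
  have hdet : (A.updateCol L fun k => ∑ i, c i • A k i).det = C (res p q) := by
    rw [Matrix.det_updateCol_sum A L c]
    have hcL : c L = 1 := by
      rw [hc]
      simp [hL, Nat.sub_self]
    rw [hcL, one_smul, hA, ← RingHom.mapMatrix_apply, ← RingHom.map_det]
    rfl
  have hvmem : ∀ k : Fin N,
      (∑ i : Fin N, c i • A k i) ∈ Ideal.span ({p, q} : Set R[X]) := by
    intro k
    rw [hrow k]
    split_ifs
    · exact Ideal.mul_mem_left _ _ (Ideal.subset_span (by simp))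
    · exact Ideal.mul_mem_left _ _ (Ideal.subset_span (by simp))
  rw [← hdet, Matrix.det_apply]
  refine Submodule.sum_mem _ fun σ _ => ?_
  have hprod : (∏ i, (A.updateCol L fun k => ∑ i, c i • A k i) (σ i) i)
      ∈ Ideal.span ({p, q} : Set R[X]) := by
    rw [← Finset.mul_prod_erase Finset.univ _ (Finset.mem_univ L)]
    refine Ideal.mul_mem_right _ _ ?_
    rw [Matrix.updateCol_self]
    exact hvmem (σ L)
  rcases Int.units_eq_one_or (Equiv.Perm.sign σ) with h | h <;> rw [h]
  · simpa using hprod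
  · simpa [Units.smul_def] using (Ideal.span ({p, q} : Set R[X])).neg_mem hprod

lemma main_div {R S : Type*} [CommRing R] [CommRing S] [IsDomain S] (φ : R →+* S)
    (f g : R[X]) (hf : φ f.leadingCoeff ≠ 0) (hg : φ g.leadingCoeff ≠ 0)
    (hres : φ (res f g) ≠ 0) (d : S[X]) (hdf : d ∣ f.map φ) (hdg : d ∣ g.map φ) :
    d.natDegree = 0 := by
  have hf0 : f.map φ ≠ 0 := by
    intro h
    apply hf
    have h2 : (f.map φ).coeff f.natDegree = 0 := by rw [h, coeff_zero]
    rw [coeff_map] at h2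
    exact h2
  rcases Nat.eq_zero_or_pos ((g.map φ).natDegree + (f.map φ).natDegree) with hN | hN
  · have h1 : (f.map φ).natDegree = 0 := by omega
    have h2 := Polynomial.natDegree_le_of_dvd hdf hf0
    omega
  · have hmem := res_mem_span (f.map φ) (g.map φ) hN
    rw [Ideal.mem_span_pair] at hmem
    obtain ⟨u, v, huv⟩ := hmem
    have hd : d ∣ C (res (f.map φ) (g.map φ)) := by
      rw [← huv]
      exact dvd_add (Dvd.dvd.mul_left hdf u) (Dvd.dvd.mul_left hdg v)
    rw [res_map φ f g (natDegree_map_of_leadingCoeff_ne_zero φ hf)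
      (natDegree_map_of_leadingCoeff_ne_zero φ hg)] at hd
    have hC : (C (φ (res f g)) : S[X]) ≠ 0 := by simpa using hres
    have := Polynomial.natDegree_le_of_dvd hd hC
    simpa using this

noncomputable def qswap : Polynomial (Polynomial ℝ) →+* Polynomial (Polynomial ℝ) :=
  eval₂RingHom
    (eval₂RingHom ((Polynomial.C.comp Polynomial.C : ℝ →+* Polynomial (Polynomial ℝ)))
      (Polynomial.X : Polynomial (Polynomial ℝ)))
    (Polynomial.C (Polynomial.X : Polynomial ℝ))

lemma spec_pswap (a : ℝ) : (specAt a).comp pswap = qswap.comp (specAt a) := by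
  apply Polynomial.ringHom_ext'
  · apply Polynomial.ringHom_ext'
    · apply Polynomial.ringHom_ext'
      · ext r
        simp [pswap, qswap, specAt]
      · simp [pswap, qswap, specAt]
    · simp [pswap, qswap, specAt]
  · simp [pswap, qswap, specAt]

lemma qswap_C (d0 : Polynomial ℝ) : qswap (Polynomial.C d0) = d0.map Polynomial.C := by
  simp only [qswap, coe_eval₂RingHom, eval₂_C]
  rfl

end SpecAux

/-- if `gcd(f̄,ḡ) = 1` (i.e. every common divisor is a unit),
and `a ∈ ℝ` is such that the leading coefficients of `f̄` and `ḡ` with respect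
to `x` and with respect to `y` do not vanish at `λ = a`, and the resultants
`Res_x(f̄,ḡ)`, `Res_y(f̄,ḡ)` do not vanish identically when `λ = a` is
substituted, then `gcd(f̄(x,y,a), ḡ(x,y,a)) = 1`. -/
theorem specialization_of_coprimality (fb gb : R3) (a : ℝ)
    (hgcd : ∀ d : R3, d ∣ fb → d ∣ gb → IsUnit d)
    (hlcx_f : (Polynomial.map (evalRingHom a) fb.leadingCoeff) ≠ 0)
    (hlcx_g : (Polynomial.map (evalRingHom a) gb.leadingCoeff) ≠ 0)
    (hlcy_f : (Polynomial.map (evalRingHom a) (pswap fb).leadingCoeff) ≠ 0)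
    (hlcy_g : (Polynomial.map (evalRingHom a) (pswap gb).leadingCoeff) ≠ 0)
    (hresx : (Polynomial.map (evalRingHom a) (res fb gb)) ≠ 0)
    (hresy : (Polynomial.map (evalRingHom a) (res (pswap fb) (pswap gb))) ≠ 0) :
    ∀ d : Polynomial (Polynomial ℝ), d ∣ specAt a fb → d ∣ specAt a gb → IsUnit d := by
  intro d hdf hdg
  have hspec : ∀ F : R3, specAt a F = F.map (mapRingHom (evalRingHom a)) := fun F => rfl
  have hψ : ∀ x : Polynomial (Polynomial ℝ),
      (mapRingHom (evalRingHom a)) x = Polynomial.map (evalRingHom a) x := fun x => rfl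
  have hfb0 : specAt a fb ≠ 0 := by
    rw [hspec]
    intro h
    apply hlcx_f
    have h2 : ((fb.map (mapRingHom (evalRingHom a))).coeff fb.natDegree) = 0 := by
      rw [h, coeff_zero]
    rw [coeff_map] at h2
    rw [← hψ]
    exact h2
  have hd0 : d ≠ 0 := by
    rintro rfl
    exact hfb0 (zero_dvd_iff.mp hdf)
  have hdeg_x : d.natDegree = 0 := by
    refine SpecAux.main_div (mapRingHom (evalRingHom a)) fb gb ?_ ?_ ?_ d ?_ ?_
    · rw [hψ]; exact hlcx_f
    · rw [hψ]; exact hlcx_g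
    · rw [hψ]; exact hresx
    · rw [← hspec]; exact hdf
    · rw [← hspec]; exact hdg
  obtain ⟨c0, hc0⟩ := Polynomial.natDegree_eq_zero.mp hdeg_x
  have hcomm : ∀ F : R3, specAt a (pswap F) = SpecAux.qswap (specAt a F) :=
    fun F => RingHom.congr_fun (SpecAux.spec_pswap a) F
  have hdeg_y : (SpecAux.qswap d).natDegree = 0 := by
    refine SpecAux.main_div (mapRingHom (evalRingHom a)) (pswap fb) (pswap gb) ?_ ?_ ?_
      (SpecAux.qswap d) ?_ ?_
    · rw [hψ]; exact hlcy_f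
    · rw [hψ]; exact hlcy_g
    · rw [hψ]; exact hresy
    · rw [← hspec, hcomm]; exact map_dvd SpecAux.qswap hdf
    · rw [← hspec, hcomm]; exact map_dvd SpecAux.qswap hdg
  rw [← hc0, SpecAux.qswap_C,
    Polynomial.natDegree_map_eq_of_injective Polynomial.C_injective] at hdeg_y
  obtain ⟨r, hr⟩ := Polynomial.natDegree_eq_zero.mp hdeg_y
  have hdC : d = Polynomial.C (Polynomial.C r) := by rw [← hc0, ← hr]
  have hr0 : r ≠ 0 := by
    rintro rfl
    rw [map_zero, map_zero] at hdC
    exact hd0 hdC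
  rw [hdC]
  exact (Polynomial.isUnit_C.mpr (Polynomial.isUnit_C.mpr (isUnit_iff_ne_zero.mpr hr0)))
end
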